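/- If ⌊i_1/s_1⌋ + ... + ⌊i_m/s_m⌋ ≥ r, then there exists a polynomial over F with leading monomial X_1^{i_1}···X_m^{i_m} (with respect to a lexicographic ordering) all of whose zeros at the points of S_1 × ... × S_m have multiplicity at least r; in fact every point of S_1 × ... × S_m is a zero of multiplicity at least r. -/

import Mathlib

open MvPolynomial

/-- The `k`-th Hasse derivative of a multivariate polynomial `F`: the coefficient of
`Z^k` in `F(X+Z)`, given by `F^{(k)} = ∑_d ∏_i C(d_i, k_i) · coeff_d(F) · X^{d−k}`. -/
noncomputable def mvHasseDeriv {σ K : Type*} [CommRing K] [DecidableEq σ]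
    (k : σ →₀ ℕ) (F : MvPolynomial σ K) : MvPolynomial σ K :=
  ∑ d ∈ F.support,
    MvPolynomial.monomial (d - k)
      ((∏ i ∈ k.support, Nat.choose (d i) (k i) : ℕ) • F.coeff d)

/-- `multGE F a M` means that the multiplicity of `F` at the point `a` is at least `M`,
i.e. all Hasse derivatives of order `< M` vanish at `a`. -/
def multGE {σ K : Type*} [CommRing K] [DecidableEq σ]
    (F : MvPolynomial σ K) (a : σ → K) (M : ℕ) : Prop :=
  ∀ k : σ →₀ ℕ, (k.sum fun _ n => n) < M → MvPolynomial.eval a (mvHasseDeriv k F) = 0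

/-- The multiplicity of `F` at `a`: the largest `M` such that all Hasse derivatives of
order `< M` vanish at `a` (junk value `0` for the zero polynomial, whose multiplicity
is infinite). -/
noncomputable def multAt {σ K : Type*} [CommRing K] [DecidableEq σ]
    (F : MvPolynomial σ K) (a : σ → K) : ℕ :=
  sSup {M | multGE F a M}

open Finset

lemma coeff_mvHasseDeriv {σ K : Type*} [CommRing K] [DecidableEq σ]
    (k e : σ →₀ ℕ) (F : MvPolynomial σ K) :
    (mvHasseDeriv k F).coeff e =
      (∏ i ∈ k.support, Nat.choose ((e + k) i) (k i) : ℕ) • F.coeff (e + k) := by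
  unfold mvHasseDeriv
  rw [MvPolynomial.coeff_sum]
  simp_rw [coeff_monomial]
  rw [Finset.sum_eq_single (e + k)]
  · rw [if_pos]
    ext i
    simp [Finsupp.tsub_apply]
  · intro d hd hne
    split_ifs with hdk
    · obtain ⟨i, hi⟩ : ∃ i, d i < k i := by
        by_contra hall
        push_neg at hall
        apply hne
        ext i
        have : (d - k) i = e i := by rw [hdk]
        rw [Finsupp.tsub_apply] at this
        have := hall i
        simp only [Finsupp.add_apply]
        omega
      have hmem : i ∈ k.support := by
        rw [Finsupp.mem_support_iff]
        omega
      rw [Finset.prod_eq_zero hmem (Nat.choose_eq_zero_of_lt hi)]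
      simp
    · rfl
  · intro hns
    rw [if_pos (by ext i; simp [Finsupp.tsub_apply]),
      MvPolynomial.notMem_support_iff.mp hns, smul_zero]

lemma mvHasseDeriv_mul_X {σ K : Type*} [CommRing K] [DecidableEq σ]
    (k : σ →₀ ℕ) (p : MvPolynomial σ K) (j : σ) :
    mvHasseDeriv k (p * X j) = mvHasseDeriv k p * X j +
      (if k j = 0 then 0 else mvHasseDeriv (k - Finsupp.single j 1) p) := by
  ext e
  rw [MvPolynomial.coeff_add, coeff_mvHasseDeriv, MvPolynomial.coeff_mul_X',
    MvPolynomial.coeff_mul_X']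
  by_cases h0 : k j = 0
  · rw [if_pos h0, MvPolynomial.coeff_zero, add_zero]
    by_cases he : j ∈ e.support
    · rw [if_pos (by simp only [Finsupp.mem_support_iff, Finsupp.add_apply] at he ⊢; omega),
        if_pos he, coeff_mvHasseDeriv]
      have he1 : 1 ≤ e j := by
        rw [Finsupp.mem_support_iff] at he; omega
      have harg : e - Finsupp.single j 1 + k = e + k - Finsupp.single j 1 := by
        ext i
        simp only [Finsupp.add_apply, Finsupp.tsub_apply, Finsupp.single_apply]
        by_cases hij : j = i
        · subst hij; simp; omega
        · simp [hij]
      rw [harg]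
      have hB : (∏ i ∈ k.support, ((e + k) i).choose (k i))
          = ∏ i ∈ k.support, (((e + k - Finsupp.single j 1) : σ →₀ ℕ) i).choose (k i) := by
        apply Finset.prod_congr rfl
        intro i hi
        have hij : i ≠ j := by
          rintro rfl
          exact Finsupp.mem_support_iff.mp hi h0
        congr 1
        simp [Finsupp.tsub_apply, Finsupp.single_apply, Ne.symm hij]
      rw [hB]
    · rw [if_neg (by simp only [Finsupp.mem_support_iff, Finsupp.add_apply] at he ⊢; omega),
        if_neg he, smul_zero]
  · -- k j ≥ 1
    rw [if_neg h0]
    have hnj : j ∈ (e + k).support := by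
      simp only [Finsupp.mem_support_iff, Finsupp.add_apply]; omega
    rw [if_pos hnj]
    have harg : e + (k - Finsupp.single j 1) = e + k - Finsupp.single j 1 := by
      ext i
      simp only [Finsupp.add_apply, Finsupp.tsub_apply, Finsupp.single_apply]
      by_cases hij : j = i
      · subst hij; simp; omega
      · simp [hij]
    set n := e + k with hn
    set c := p.coeff (n - Finsupp.single j 1) with hc
    set P : ℕ := ∏ i ∈ k.support.erase j, Nat.choose (n i) (k i) with hP
    have hjk : j ∈ k.support := Finsupp.mem_support_iff.mpr h0
    have h1 : (if j ∈ e.support then (mvHasseDeriv k p).coeff (e - Finsupp.single j 1) else 0)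
        = (Nat.choose (n j - 1) (k j) * P) • c := by
      by_cases he : j ∈ e.support
      · rw [if_pos he, coeff_mvHasseDeriv]
        have he1 : 1 ≤ e j := by rw [Finsupp.mem_support_iff] at he; omega
        have harg2 : e - Finsupp.single j 1 + k = n - Finsupp.single j 1 := by
          ext i
          simp only [hn, Finsupp.add_apply, Finsupp.tsub_apply, Finsupp.single_apply]
          by_cases hij : j = i
          · subst hij; simp; omega
          · simp [hij]
        rw [harg2, ← hc]
        congr 1
        rw [← Finset.mul_prod_erase _ _ hjk]
        congr 1
        · congr 1
          simp [Finsupp.tsub_apply, Finsupp.single_apply, hn, Finsupp.add_apply]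
        · apply Finset.prod_congr rfl
          intro i hi
          have hij : i ≠ j := Finset.ne_of_mem_erase hi
          congr 1
          simp [Finsupp.tsub_apply, Finsupp.single_apply, Ne.symm hij]
      · rw [if_neg he]
        have he0 : e j = 0 := by
          simpa [Finsupp.mem_support_iff] using he
        have : Nat.choose (n j - 1) (k j) = 0 := by
          apply Nat.choose_eq_zero_of_lt
          simp only [hn, Finsupp.add_apply]
          omega
        rw [this, zero_mul, zero_smul]
    have h2 : (mvHasseDeriv (k - Finsupp.single j 1) p).coeff e
        = (Nat.choose (n j - 1) (k j - 1) * P) • c := by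
      rw [coeff_mvHasseDeriv, harg, ← hc]
      congr 1
      set k' := k - Finsupp.single j 1 with hk'
      have hk'apply : ∀ i, k' i = if i = j then k j - 1 else k i := by
        intro i
        simp only [hk', Finsupp.tsub_apply, Finsupp.single_apply]
        by_cases hij : i = j
        · subst hij; simp
        · simp [hij, Ne.symm hij]
      have hsub : k'.support ⊆ k.support := by
        intro i hi
        rw [Finsupp.mem_support_iff] at hi ⊢
        rw [hk'apply] at hi
        by_cases hij : i = j
        · subst hij; simpa using h0
        · simpa [hij] using hi
      rw [Finset.prod_subset hsub (by
        intro i hi hni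
        rw [Finsupp.notMem_support_iff] at hni
        rw [hni, Nat.choose_zero_right])]
      rw [← Finset.mul_prod_erase _ _ hjk]
      congr 1
      · rw [hk'apply]
        simp [Finsupp.tsub_apply, Finsupp.single_apply]
      · apply Finset.prod_congr rfl
        intro i hi
        have hij : i ≠ j := Finset.ne_of_mem_erase hi
        rw [hk'apply]
        simp [hij, Finsupp.tsub_apply, Finsupp.single_apply, Ne.symm hij]
    rw [h1, h2, ← add_smul]
    congr 1
    rw [← Finset.mul_prod_erase _ _ hjk, ← add_mul]
    congr 1
    obtain ⟨aa, ha⟩ : ∃ aa, n j = aa + 1 := ⟨n j - 1, by simp only [hn, Finsupp.add_apply]; omega⟩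
    obtain ⟨bb, hb⟩ : ∃ bb, k j = bb + 1 := ⟨k j - 1, by omega⟩
    rw [ha, hb]
    simp [Nat.choose_succ_succ']
    omega

lemma mvHasseDeriv_add {σ K : Type*} [CommRing K] [DecidableEq σ]
    (k : σ →₀ ℕ) (p q : MvPolynomial σ K) :
    mvHasseDeriv k (p + q) = mvHasseDeriv k p + mvHasseDeriv k q := by
  ext e
  simp [coeff_mvHasseDeriv, MvPolynomial.coeff_add, smul_add]

lemma eval_mvHasseDeriv {σ K : Type*} [CommRing K] [DecidableEq σ]
    (a : σ → K) (F : MvPolynomial σ K) (k : σ →₀ ℕ) :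
    eval a (mvHasseDeriv k F) =
      coeff k (aeval (fun i => X i + C (a i) : σ → MvPolynomial σ K) F) := by
  induction F using MvPolynomial.induction_on generalizing k with
  | C c =>
      have hC : mvHasseDeriv k (C c : MvPolynomial σ K) = if k = 0 then C c else 0 := by
        ext e
        rw [coeff_mvHasseDeriv]
        split_ifs with hk
        · subst hk
          simp
        · rw [MvPolynomial.coeff_C, if_neg (by
            intro h0
            exact hk (add_eq_zero.mp h0.symm).2), smul_zero, MvPolynomial.coeff_zero]
      rw [hC, aeval_C]
      split_ifs with hk
      · subst hk
        simp [MvPolynomial.coeff_C, algebraMap_eq]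
      · simp [MvPolynomial.coeff_C, algebraMap_eq, Ne.symm hk]
  | add p q hp hq =>
      rw [mvHasseDeriv_add, map_add, map_add, MvPolynomial.coeff_add, hp, hq]
  | mul_X p j hp =>
      rw [mvHasseDeriv_mul_X, map_add, map_mul, eval_X, map_mul, aeval_X, mul_add,
        MvPolynomial.coeff_add, MvPolynomial.coeff_mul_X',
        apply_ite (eval a), map_zero, hp]
      have hc : coeff k ((aeval (fun i => (X i + C (a i) : MvPolynomial σ K))) p * C (a j))
          = a j * coeff k ((aeval (fun i => (X i + C (a i) : MvPolynomial σ K))) p) := by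
        rw [mul_comm, MvPolynomial.coeff_C_mul]
      rw [hc]
      by_cases h0 : k j = 0
      · rw [if_pos h0, if_neg (by simp [Finsupp.mem_support_iff, h0]), add_zero, zero_add,
          mul_comm]
      · rw [if_neg h0, if_pos (Finsupp.mem_support_iff.mpr h0), hp]
        ring

lemma mul_bound {σ K : Type*} [CommRing K] {P Q : MvPolynomial σ K} {D1 D2 : σ →₀ ℕ}
    (hP : ∀ d ∈ P.support, d ≤ D1) (hQ : ∀ d ∈ Q.support, d ≤ D2) :
    (∀ d ∈ (P * Q).support, d ≤ D1 + D2) ∧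
      (P * Q).coeff (D1 + D2) = P.coeff D1 * Q.coeff D2 := by
  classical
  constructor
  · intro d hd
    obtain ⟨d1, hd1, d2, hd2, rfl⟩ := Finset.mem_add.mp (MvPolynomial.support_mul P Q hd)
    exact add_le_add (hP _ hd1) (hQ _ hd2)
  · have hmem : ((D1, D2) : (σ →₀ ℕ) × (σ →₀ ℕ)) ∈ Finset.HasAntidiagonal.antidiagonal (D1 + D2) :=
      Finset.HasAntidiagonal.mem_antidiagonal.mpr rfl
    rw [MvPolynomial.coeff_mul, Finset.sum_eq_single_of_mem (D1, D2) hmem]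
    intro b hb hne
    rw [Finset.HasAntidiagonal.mem_antidiagonal] at hb
    by_cases h1 : P.coeff b.1 = 0
    · rw [h1, zero_mul]
    by_cases h2 : Q.coeff b.2 = 0
    · rw [h2, mul_zero]
    exfalso
    have hb1 := Finsupp.le_def.mp (hP _ (MvPolynomial.mem_support_iff.mpr h1))
    have hb2 := Finsupp.le_def.mp (hQ _ (MvPolynomial.mem_support_iff.mpr h2))
    apply hne
    have heq1 : b.1 = D1 := by
      ext i
      have h3 := DFunLike.congr_fun hb i
      simp only [Finsupp.add_apply] at h3
      have h4 := hb1 i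
      have h5 := hb2 i
      omega
    have heq2 : b.2 = D2 := by
      ext i
      have h3 := DFunLike.congr_fun hb i
      simp only [Finsupp.add_apply] at h3
      have h4 := hb1 i
      have h5 := hb2 i
      omega
    exact Prod.ext heq1 heq2

lemma prod_bound {σ K ι : Type*} [CommRing K] (s : Finset ι) (f : ι → MvPolynomial σ K)
    (D : ι → (σ →₀ ℕ)) (h : ∀ j ∈ s, ∀ d ∈ (f j).support, d ≤ D j) :
    (∀ d ∈ (∏ j ∈ s, f j).support, d ≤ ∑ j ∈ s, D j) ∧
      (∏ j ∈ s, f j).coeff (∑ j ∈ s, D j) = ∏ j ∈ s, (f j).coeff (D j) := by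
  classical
  induction s using Finset.cons_induction with
  | empty =>
      constructor
      · intro d hd
        simp only [Finset.prod_empty] at hd
        have hd' := MvPolynomial.mem_support_iff.mp hd
        rw [MvPolynomial.coeff_one] at hd'
        split_ifs at hd' with h0
        · simp [← h0]
        · exact absurd rfl hd'
      · simp [MvPolynomial.coeff_one]
  | cons j s hj ih =>
      have hrest := ih (fun i hi d hd => h i (Finset.mem_cons_of_mem hi) d hd)
      have hcur : ∀ d ∈ (f j).support, d ≤ D j := h j (Finset.mem_cons_self j s)
      have hmul := mul_bound hcur hrest.1
      simp only [Finset.prod_cons, Finset.sum_cons]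
      exact ⟨hmul.1, by rw [hmul.2, hrest.2]⟩

lemma pow_bound {σ K : Type*} [CommRing K] {P : MvPolynomial σ K} {D : σ →₀ ℕ}
    (hP : ∀ d ∈ P.support, d ≤ D) (n : ℕ) :
    (∀ d ∈ (P ^ n).support, d ≤ n • D) ∧ (P ^ n).coeff (n • D) = (P.coeff D) ^ n := by
  classical
  induction n with
  | zero =>
      constructor
      · intro d hd
        simp only [pow_zero] at hd
        have hd' := MvPolynomial.mem_support_iff.mp hd
        rw [MvPolynomial.coeff_one] at hd'
        split_ifs at hd' with h0
        · simp [← h0]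
        · exact absurd rfl hd'
      · simp [MvPolynomial.coeff_one]
  | succ n ih =>
      have hmul := mul_bound ih.1 hP
      simp only [pow_succ, succ_nsmul]
      exact ⟨hmul.1, by rw [hmul.2, ih.2]⟩

lemma lin_bound {σ K : Type*} [CommRing K] [Nontrivial K] (j : σ) (b : K) :
    (∀ d ∈ (X j - C b : MvPolynomial σ K).support, d ≤ Finsupp.single j 1) ∧
      (X j - C b : MvPolynomial σ K).coeff (Finsupp.single j 1) = 1 := by
  classical
  have hco : ∀ d, (X j - C b : MvPolynomial σ K).coeff d
      = (if Finsupp.single j 1 = d then (1 : K) else 0) - (if 0 = d then b else 0) := by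
    intro d
    rw [MvPolynomial.coeff_sub, MvPolynomial.coeff_X', MvPolynomial.coeff_C]
  constructor
  · intro d hd
    have hd' := MvPolynomial.mem_support_iff.mp hd
    rw [hco] at hd'
    by_cases h1 : Finsupp.single j 1 = d
    · rw [← h1]
    by_cases h2 : (0 : σ →₀ ℕ) = d
    · rw [← h2]; exact zero_le
    · rw [if_neg h1, if_neg h2, sub_zero] at hd'
      exact absurd rfl hd'
  · rw [hco, if_pos rfl, if_neg (by
      intro h0
      exact one_ne_zero (Finsupp.single_eq_zero.mp h0.symm)), sub_zero]


/-- if `⌊i_1/s_1⌋ + ⋯ + ⌊i_m/s_m⌋ ≥ r`, then there is a polynomial with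
leading monomial `X_1^{i_1}⋯X_m^{i_m}` (w.r.t. the lexicographic ordering) which
vanishes with multiplicity at least `r` at every point of `S_1 × ⋯ × S_m`. -/
theorem exists_poly_high_multiplicity {m : ℕ} {K : Type*} [Field K]
    (S : Fin m → Finset K) (I : Fin m →₀ ℕ) (r : ℕ)
    (h : r ≤ ∑ j : Fin m, I j / (S j).card) :
    ∃ F : MvPolynomial (Fin m) K,
      F.coeff I ≠ 0 ∧ (∀ d ∈ F.support, toLex d ≤ toLex I) ∧
      ∀ a ∈ Fintype.piFinset S, multGE F a r := by
  classical
  set q : Fin m → ℕ := fun j => I j / (S j).card with hqdef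
  set t : Fin m → ℕ := fun j => I j % (S j).card with htdef
  set g : Fin m → MvPolynomial (Fin m) K :=
    fun j => (∏ b ∈ S j, (X j - C b)) ^ q j * X j ^ t j with hg
  have hXpow : ∀ (j : Fin m) (n : ℕ),
      (∀ d ∈ (X j ^ n : MvPolynomial (Fin m) K).support, d ≤ Finsupp.single j n) ∧
        (X j ^ n : MvPolynomial (Fin m) K).coeff (Finsupp.single j n) = 1 := by
    intro j n
    rw [MvPolynomial.X_pow_eq_monomial]
    constructor
    · intro d hd
      rw [MvPolynomial.support_monomial, if_neg (one_ne_zero)] at hd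
      rw [Finset.mem_singleton.mp hd]
    · rw [MvPolynomial.coeff_monomial, if_pos rfl]
  have hinner : ∀ j : Fin m,
      (∀ d ∈ ((∏ b ∈ S j, (X j - C b)) ^ q j : MvPolynomial (Fin m) K).support,
        d ≤ Finsupp.single j ((S j).card * q j)) ∧
      ((∏ b ∈ S j, (X j - C b)) ^ q j : MvPolynomial (Fin m) K).coeff
        (Finsupp.single j ((S j).card * q j)) = 1 := by
    intro j
    have hp := prod_bound (S j) (fun b => (X j - C b : MvPolynomial (Fin m) K))
      (fun _ => Finsupp.single j 1) (fun b _ => (lin_bound j b).1)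
    have hsum : (∑ _b ∈ S j, Finsupp.single j 1) = Finsupp.single j ((S j).card) := by
      rw [Finset.sum_const, Finsupp.smul_single, smul_eq_mul, mul_one]
    rw [hsum] at hp
    have hpc : ((∏ b ∈ S j, (X j - C b) : MvPolynomial (Fin m) K)).coeff
        (Finsupp.single j ((S j).card)) = 1 := by
      rw [hp.2, Finset.prod_eq_one (fun b _ => (lin_bound j b).2)]
    have hpow := pow_bound hp.1 (q j)
    have hsm : q j • Finsupp.single j ((S j).card) = Finsupp.single j ((S j).card * q j) := by
      rw [Finsupp.smul_single, smul_eq_mul, mul_comm]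
    rw [hsm] at hpow
    exact ⟨hpow.1, by rw [hpow.2, hpc, one_pow]⟩
  have hgj : ∀ j : Fin m, (∀ d ∈ (g j).support, d ≤ Finsupp.single j (I j)) ∧
      (g j).coeff (Finsupp.single j (I j)) = 1 := by
    intro j
    have hmul := mul_bound (hinner j).1 (hXpow j (t j)).1
    have hadd : Finsupp.single j ((S j).card * q j) + Finsupp.single j (t j)
        = Finsupp.single j (I j) := by
      rw [← Finsupp.single_add]
      congr 1
      exact Nat.div_add_mod (I j) ((S j).card)
    rw [hadd] at hmul
    exact ⟨hmul.1, by rw [hmul.2, (hinner j).2, (hXpow j (t j)).2, one_mul]⟩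
  have hF := prod_bound Finset.univ g (fun j => Finsupp.single j (I j))
    (fun j _ => (hgj j).1)
  have hIsum : (∑ j : Fin m, Finsupp.single j (I j)) = I := by
    ext i
    rw [Finsupp.finset_sum_apply]
    simp [Finsupp.single_apply]
  rw [hIsum] at hF
  refine ⟨∏ j, g j, ?_, ?_, ?_⟩
  · rw [hF.2, Finset.prod_eq_one (fun j _ => (hgj j).2)]
    exact one_ne_zero
  · intro d hd
    exact Finsupp.toLex_monotone (hF.1 d hd)
  · intro a ha k hk
    rw [eval_mvHasseDeriv]
    have hmem : ∀ j, a j ∈ S j := by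
      rw [Fintype.mem_piFinset] at ha
      exact ha
    have hdvd : (∏ j : Fin m, (X j - C (a j)) ^ q j) ∣ ∏ j, g j := by
      apply Finset.prod_dvd_prod_of_dvd
      intro j _
      exact dvd_mul_of_dvd_left
        (pow_dvd_pow_of_dvd (Finset.dvd_prod_of_mem _ (hmem j)) _) _
    obtain ⟨G, hG⟩ := hdvd
    rw [hG, map_mul]
    have hTP : (aeval (fun i => (X i + C (a i) : MvPolynomial (Fin m) K)))
        (∏ j : Fin m, (X j - C (a j)) ^ q j)
        = ∏ j : Fin m, (X j : MvPolynomial (Fin m) K) ^ q j := by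
      rw [map_prod]
      apply Finset.prod_congr rfl
      intro j _
      rw [map_pow, map_sub, aeval_X, aeval_C]
      congr 1
      rw [MvPolynomial.algebraMap_eq]
      ring
    rw [hTP]
    set Q : Fin m →₀ ℕ := Finsupp.equivFunOnFinite.symm q with hQ
    have hQap : ∀ j, Q j = q j := fun j => rfl
    have hmon : (∏ j : Fin m, (X j : MvPolynomial (Fin m) K) ^ q j) = monomial Q 1 := by
      rw [MvPolynomial.monomial_eq, MvPolynomial.C_1, one_mul, Finsupp.prod, eq_comm]
      apply Finset.prod_subset (Finset.subset_univ _)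
      intro j _ hj
      rw [Finsupp.notMem_support_iff] at hj
      rw [hj, pow_zero]
    rw [hmon, MvPolynomial.coeff_mul]
    apply Finset.sum_eq_zero
    intro p hp
    rw [Finset.HasAntidiagonal.mem_antidiagonal] at hp
    rw [MvPolynomial.coeff_monomial]
    split_ifs with hx
    · exfalso
      have hXle : ∀ j, Q j ≤ k j := by
        intro j
        have h6 := DFunLike.congr_fun hp j
        simp only [Finsupp.add_apply] at h6
        rw [← hx] at h6
        omega
      have hle : (∑ j : Fin m, Q j) ≤ ∑ j : Fin m, k j :=
        Finset.sum_le_sum (fun j _ => hXle j)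
      have h1 : (k.sum fun _ n => n) = ∑ j : Fin m, k j :=
        Finsupp.sum_fintype _ _ (fun _ => rfl)
      have h2 : (∑ j : Fin m, Q j) = ∑ j : Fin m, q j := by
        apply Finset.sum_congr rfl
        intro j _
        rw [hQap j]
      have h3 : Finset.univ.sum q = ∑ j : Fin m, q j := rfl
      omega
    · rw [zero_mul]
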